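/- Let f be analytic in a Delta-domain Δ(φ, η) = {z : |z| < 1+η, |Arg(z−1)| > φ} with 0 < φ < π/2, η > 0, and suppose f(z) = O(|1−z|^A) uniformly on Δ(φ,η) for some real A. Then on any strictly smaller Delta-domain Δ(φ', η') with φ < φ' < π/2 and 0 < η' < η, the derivative satisfies f'(z) = O(|1−z|^{A−1}). -/

import Mathlib

open Complex Real

open Metric

set_option maxHeartbeats 1000000
set_option linter.unnecessarySeqFocus false

lemma abs_sub_le_abs_add_abs (a b : ℂ) :
    ‖a - b‖ ≤ ‖a‖ + ‖b‖ := by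
  simpa using norm_sub_le a b

lemma arg_gt_iff {φ : ℝ} (hφ : 0 < φ) (hφ' : φ < π / 2) (ζ : ℂ) :
    φ < |Complex.arg ζ| ↔ ζ.re < ‖ζ‖ * Real.cos φ := by
  constructor
  · intro h
    have hζ : ζ ≠ 0 := by
      rintro rfl
      simp [Complex.arg_zero] at h
      linarith
    have habs : 0 < ‖ζ‖ := norm_pos_iff.mpr hζ
    have hre : ζ.re = ‖ζ‖ * Real.cos (Complex.arg ζ) := by
      rw [Complex.cos_arg hζ]; field_simp
    have hc : Real.cos (Complex.arg ζ) < Real.cos φ := by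
      have heq : Real.cos (Complex.arg ζ) = Real.cos |Complex.arg ζ| := by
        rcases abs_choice (Complex.arg ζ) with h' | h' <;> rw [h'] <;> simp [Real.cos_neg]
      rw [heq]
      exact Real.cos_lt_cos_of_nonneg_of_le_pi hφ.le (abs_arg_le_pi ζ) h
    rw [hre]
    exact (mul_lt_mul_iff_right₀ habs).2 hc
  · intro h
    by_contra hle
    push_neg at hle
    rcases eq_or_ne ζ 0 with rfl | hζ
    · simp at h
    have habs : 0 < ‖ζ‖ := norm_pos_iff.mpr hζ
    have hre : ζ.re = ‖ζ‖ * Real.cos (Complex.arg ζ) := by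
      rw [Complex.cos_arg hζ]; field_simp
    have hc : Real.cos φ ≤ Real.cos (Complex.arg ζ) := by
      have heq : Real.cos (Complex.arg ζ) = Real.cos |Complex.arg ζ| := by
        rcases abs_choice (Complex.arg ζ) with h' | h' <;> rw [h'] <;> simp [Real.cos_neg]
      rw [heq]
      exact Real.cos_le_cos_of_nonneg_of_le_pi (abs_nonneg _) (by linarith [Real.pi_pos]) hle
    rw [hre] at h
    nlinarith

/-- The Delta-domain `Δ(φ, η) = {z : |z| < 1+η, |Arg(z−1)| > φ}`. -/
def DeltaDomain (φ η : ℝ) : Set ℂ :=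
  {z : ℂ | ‖z‖ < 1 + η ∧ φ < |Complex.arg (z - 1)|}

/-- Singular differentiation of O-transfers: if `f` is analytic on `Δ(φ,η)` with
`f(z) = O(|1−z|^A)` there, then on any strictly smaller Delta-domain `Δ(φ',η')`
one has `f'(z) = O(|1−z|^{A−1})`. -/
theorem singular_differentiation (φ η A : ℝ) (hφ : 0 < φ) (hφ' : φ < π / 2)
    (hη : 0 < η) (f : ℂ → ℂ)
    (hf : DifferentiableOn ℂ f (DeltaDomain φ η))
    (hO : ∃ C : ℝ, ∀ z ∈ DeltaDomain φ η, ‖f z‖ ≤ C * ‖1 - z‖ ^ A) :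
    ∀ φ' η' : ℝ, φ < φ' → φ' < π / 2 → 0 < η' → η' < η →
      ∃ C' : ℝ, ∀ z ∈ DeltaDomain φ' η',
        ‖deriv f z‖ ≤ C' * ‖1 - z‖ ^ (A - 1) := by
  intro φ' η' h1 h2 h3 h4
  obtain ⟨C, hC⟩ := hO
  have hcosφ : 0 < Real.cos φ := Real.cos_pos_of_mem_Ioo ⟨by linarith [Real.pi_pos], hφ'⟩
  have hcosφ'0 : 0 < Real.cos φ' := Real.cos_pos_of_mem_Ioo ⟨by linarith [Real.pi_pos], h2⟩
  have hcoslt : Real.cos φ' < Real.cos φ :=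
    Real.cos_lt_cos_of_nonneg_of_le_pi hφ.le (by linarith [Real.pi_pos]) h1
  obtain ⟨κ, hκpos, hκ1, hκη, hκcos⟩ :
      ∃ κ : ℝ, 0 < κ ∧ κ < 1 ∧ κ * (2 + η) ≤ η - η' ∧
        κ * (1 + Real.cos φ) ≤ Real.cos φ - Real.cos φ' := by
    refine ⟨min ((η - η') / (2 + η)) ((Real.cos φ - Real.cos φ') / (1 + Real.cos φ)),
      lt_min (div_pos (by linarith) (by linarith)) (div_pos (by linarith) (by linarith)),
      ?_, ?_, ?_⟩
    · have : (Real.cos φ - Real.cos φ') / (1 + Real.cos φ) < 1 := by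
        rw [div_lt_one (by linarith)]; linarith
      exact lt_of_le_of_lt (min_le_right _ _) this
    · have h := min_le_left ((η - η') / (2 + η)) ((Real.cos φ - Real.cos φ') / (1 + Real.cos φ))
      calc _ ≤ (η - η') / (2 + η) * (2 + η) := mul_le_mul_of_nonneg_right h (by linarith)
        _ = η - η' := by field_simp
    · have h := min_le_right ((η - η') / (2 + η)) ((Real.cos φ - Real.cos φ') / (1 + Real.cos φ))
      calc _ ≤ (Real.cos φ - Real.cos φ') / (1 + Real.cos φ) * (1 + Real.cos φ) :=
            mul_le_mul_of_nonneg_right h (by linarith)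
        _ = Real.cos φ - Real.cos φ' := by field_simp
  refine ⟨|C| * ((1 - κ) ^ A + (1 + κ) ^ A) / κ, ?_⟩
  rintro z ⟨hz1, hz2⟩
  have hz2' : (z - 1).re < ‖z - 1‖ * Real.cos φ' :=
    (arg_gt_iff (by linarith) h2 _).1 hz2
  have hzne : z ≠ 1 := by
    rintro rfl
    simp [Complex.arg_zero] at hz2
    linarith
  have hdpos : 0 < ‖z - 1‖ := norm_pos_iff.mpr (sub_ne_zero.2 hzne)
  obtain ⟨d, hd, hdpos⟩ : ∃ d : ℝ, ‖z - 1‖ = d ∧ 0 < d := ⟨_, rfl, hdpos⟩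
  rw [hd] at hz2'
  have hdlt : d < 2 + η := by
    have := abs_sub_le_abs_add_abs z 1
    rw [hd] at this
    simp only [norm_one] at this
    linarith
  have hrpos : 0 < κ * d := mul_pos hκpos hdpos
  -- closed ball inclusion
  have hball : closedBall z (κ * d) ⊆ DeltaDomain φ η := by
    intro w hw
    rw [mem_closedBall, Complex.dist_eq] at hw
    have hlow : (1 - κ) * d ≤ ‖w - 1‖ := by
      have h' : d ≤ ‖w - 1‖ + ‖w - z‖ := by
        have : (z - 1) = (w - 1) - (w - z) := by ring
        rw [← hd, this]
        exact abs_sub_le_abs_add_abs _ _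
      nlinarith
    constructor
    · have h1' : ‖w‖ ≤ ‖w - z‖ + ‖z‖ := by
        have : w = (w - z) + z := by ring
        calc ‖w‖ = ‖(w - z) + z‖ := by rw [← this]
          _ ≤ ‖w - z‖ + ‖z‖ := norm_add_le _ _
      have hκd : κ * d ≤ κ * (2 + η) := mul_le_mul_of_nonneg_left hdlt.le hκpos.le
      calc ‖w‖ ≤ ‖w - z‖ + ‖z‖ := h1'
        _ ≤ κ * d + ‖z‖ := by linarith
        _ < κ * (2 + η) + (1 + η') := by linarith
        _ ≤ (η - η') + (1 + η') := by linarith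
        _ = 1 + η := by ring
    · rw [arg_gt_iff hφ hφ']
      have hre : (w - 1).re ≤ (z - 1).re + κ * d := by
        have heq : (w - 1).re = (z - 1).re + (w - z).re := by simp
        have h2' : (w - z).re ≤ ‖w - z‖ := Complex.re_le_norm _
        linarith
      have key : (w - 1).re < (1 - κ) * d * Real.cos φ := by
        have h3' : d * Real.cos φ' + κ * d ≤ (1 - κ) * d * Real.cos φ := by nlinarith
        linarith
      calc (w - 1).re < (1 - κ) * d * Real.cos φ := key
        _ ≤ ‖w - 1‖ * Real.cos φ := mul_le_mul_of_nonneg_right hlow hcosφ.le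
  -- bound on the sphere
  have hsphere : ∀ w ∈ sphere z (κ * d),
      ‖f w‖ ≤ |C| * ((1 - κ) ^ A + (1 + κ) ^ A) * d ^ A := by
    intro w hw
    rw [mem_sphere, Complex.dist_eq] at hw
    have hwmem : w ∈ DeltaDomain φ η := hball (by
      rw [mem_closedBall, Complex.dist_eq, hw])
    have hbnd := hC w hwmem
    have hlow : (1 - κ) * d ≤ ‖1 - w‖ := by
      rw [norm_sub_rev]
      have h' : d ≤ ‖w - 1‖ + ‖w - z‖ := by
        have heq : (z - 1) = (w - 1) - (w - z) := by ring
        rw [← hd, heq]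
        exact abs_sub_le_abs_add_abs _ _
      nlinarith
    have hhigh : ‖1 - w‖ ≤ (1 + κ) * d := by
      rw [norm_sub_rev]
      have h' : ‖w - 1‖ ≤ ‖w - z‖ + ‖z - 1‖ := by
        have heq : (w - 1) = (w - z) + (z - 1) := by ring
        calc ‖w - 1‖ = ‖(w - z) + (z - 1)‖ := by rw [← heq]
          _ ≤ ‖w - z‖ + ‖z - 1‖ := norm_add_le _ _
      rw [hd] at h'
      nlinarith
    have hlowpos : 0 < (1 - κ) * d := mul_pos (by linarith) hdpos
    have hpow : ‖1 - w‖ ^ A ≤ ((1 - κ) ^ A + (1 + κ) ^ A) * d ^ A := by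
      rcases le_or_gt 0 A with hA | hA
      · have h' := Real.rpow_le_rpow (by positivity) hhigh hA
        rw [Real.mul_rpow (by linarith) hdpos.le] at h'
        have h0 : 0 ≤ (1 - κ) ^ A := Real.rpow_nonneg (by linarith) A
        have h0' : 0 ≤ d ^ A := Real.rpow_nonneg hdpos.le A
        nlinarith
      · have h' := Real.rpow_le_rpow_of_nonpos hlowpos hlow hA.le
        rw [Real.mul_rpow (by linarith) hdpos.le] at h'
        have h0 : 0 ≤ (1 + κ) ^ A := Real.rpow_nonneg (by linarith) A
        have h0' : 0 ≤ d ^ A := Real.rpow_nonneg hdpos.le A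
        nlinarith
    have hCabs : C * ‖1 - w‖ ^ A ≤ |C| * ‖1 - w‖ ^ A :=
      mul_le_mul_of_nonneg_right (le_abs_self C) (Real.rpow_nonneg (by positivity) A)
    calc ‖f w‖ = ‖f w‖ := rfl
      _ ≤ C * ‖1 - w‖ ^ A := hbnd
      _ ≤ |C| * ‖1 - w‖ ^ A := hCabs
      _ ≤ |C| * (((1 - κ) ^ A + (1 + κ) ^ A) * d ^ A) :=
          mul_le_mul_of_nonneg_left hpow (abs_nonneg C)
      _ = |C| * ((1 - κ) ^ A + (1 + κ) ^ A) * d ^ A := by ring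
  -- openness of the larger domain, for DiffContOnCl
  have hopen : IsOpen (DeltaDomain φ η) := by
    have heq : DeltaDomain φ η =
        {z : ℂ | ‖z‖ < 1 + η} ∩
        {z : ℂ | (z - 1).re < ‖z - 1‖ * Real.cos φ} := by
      ext ζ
      simp only [DeltaDomain, Set.mem_setOf_eq, Set.mem_inter_iff]
      exact and_congr Iff.rfl (arg_gt_iff hφ hφ' _)
    rw [heq]
    exact (isOpen_lt continuous_norm continuous_const).inter
      (isOpen_lt (Complex.continuous_re.comp (continuous_id.sub continuous_const))
        ((continuous_norm.comp (continuous_id.sub continuous_const)).mul continuous_const))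
  have hdcc : DiffContOnCl ℂ f (ball z (κ * d)) :=
    ⟨hf.mono (ball_subset_closedBall.trans hball),
      hf.continuousOn.mono (closure_ball_subset_closedBall.trans hball)⟩
  have hcauchy : ‖deriv f z‖ ≤ (|C| * ((1 - κ) ^ A + (1 + κ) ^ A) * d ^ A) / (κ * d) :=
    norm_deriv_le_of_forall_mem_sphere_norm_le hrpos hdcc hsphere
  have hfinal : (|C| * ((1 - κ) ^ A + (1 + κ) ^ A) * d ^ A) / (κ * d)
      = |C| * ((1 - κ) ^ A + (1 + κ) ^ A) / κ * d ^ (A - 1) := by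
    rw [Real.rpow_sub hdpos, Real.rpow_one]
    field_simp
  calc ‖deriv f z‖ = ‖deriv f z‖ := rfl
    _ ≤ (|C| * ((1 - κ) ^ A + (1 + κ) ^ A) * d ^ A) / (κ * d) := hcauchy
    _ = |C| * ((1 - κ) ^ A + (1 + κ) ^ A) / κ * d ^ (A - 1) := hfinal
    _ = |C| * ((1 - κ) ^ A + (1 + κ) ^ A) / κ * ‖1 - z‖ ^ (A - 1) := by
        rw [norm_sub_rev, hd]
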